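/- Let d ≥ 1, α ≥ 0, β ∈ ℝ, γ = α + iβ, t ≥ 0, and set ρ_t = 1 + 2πγt (so Re ρ_t > 0). Let g(t) = e^{−π|t|²} and let T be the heat propagator T f = 𝓕^{−1}(e^{−4π²γt|·|²} 𝓕f). Then for all z = (z₁, z₂) and w = (w₁, w₂) in ℝ^d × ℝ^d, the Gabor matrix satisfies ⟨T π(z)g, π(w)g⟩_{L²(ℝ^d)} = (2ρ_t)^{−d/2} exp(−π(|z₂|² + |w₂|²)) exp(2πi(z₂·z₁ − w₂·w₁)) exp((π/(2ρ_t)) c·c), where c = (z₂ + w₂) + i(w₁ − z₁) ∈ ℂ^d, c·c = Σ_k c_k², and (2ρ_t)^{−d/2} is the principal branch. -/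

import Mathlib

open MeasureTheory Complex
open scoped Real

noncomputable section

variable {d : ℕ}

/-- Fourier transform `𝓕f(ξ) = ∫ f(x) e^{−2πi x·ξ} dx`. -/
def fourierTf (f : EuclideanSpace ℝ (Fin d) → ℂ) (ξ : EuclideanSpace ℝ (Fin d)) : ℂ :=
  ∫ x, f x * Complex.exp (-(2 * π * (inner ℝ x ξ : ℝ)) * Complex.I)

/-- Heat propagator `Tf = 𝓕^{−1}(e^{−4π²γt|·|²} 𝓕f)`, written as a pointwise integral. -/
def heatProp (γ : ℂ) (t : ℝ) (f : EuclideanSpace ℝ (Fin d) → ℂ)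
    (x : EuclideanSpace ℝ (Fin d)) : ℂ :=
  ∫ ξ, Complex.exp (-4 * π ^ 2 * γ * t * ‖ξ‖ ^ 2) * fourierTf f ξ *
    Complex.exp ((2 * π * (inner ℝ x ξ : ℝ)) * Complex.I)

/-- Time–frequency shift `π(z)f(t) = e^{2πi z₂·t} f(t − z₁)`. -/
def tfShift (z : EuclideanSpace ℝ (Fin d) × EuclideanSpace ℝ (Fin d))
    (f : EuclideanSpace ℝ (Fin d) → ℂ) (t : EuclideanSpace ℝ (Fin d)) : ℂ :=
  Complex.exp ((2 * π * (inner ℝ z.2 t : ℝ)) * Complex.I) * f (t - z.1)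

/-- Gaussian window `g(t) = e^{−π|t|²}`. -/
def gaussWin (t : EuclideanSpace ℝ (Fin d)) : ℂ :=
  (Real.exp (-π * ‖t‖ ^ 2) : ℝ)

set_option maxHeartbeats 1000000

lemma eucl_symm_apply (y : Fin d → ℝ) (i : Fin d) :
    (MeasurableEquiv.toLp 2 (Fin d → ℝ)).symm.symm y i = y i := by
  rfl

lemma norm_sq_eucl (v : EuclideanSpace ℝ (Fin d)) : ‖v‖ ^ 2 = ∑ i, v i ^ 2 := by
  rw [EuclideanSpace.norm_eq, Real.sq_sqrt (by positivity)]
  simp [sq_abs]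

lemma inner_eucl (x y : EuclideanSpace ℝ (Fin d)) : (inner ℝ x y : ℝ) = ∑ i, x i * y i := by
  simp [PiLp.inner_apply, RCLike.inner_apply, conj_trivial, mul_comm]

lemma gauss_int {b : ℂ} (hb : 0 < b.re) (c : Fin d → ℂ) :
    ∫ v : EuclideanSpace ℝ (Fin d), Complex.exp (-b * (‖v‖ : ℂ) ^ 2 + ∑ i, c i * (v i : ℂ))
      = (π / b) ^ ((d : ℂ) / 2) * Complex.exp ((∑ i, c i ^ 2) / (4 * b)) := by
  have hmp := (EuclideanSpace.volume_preserving_symm_measurableEquiv_toLp (Fin d)).symm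
  rw [← hmp.integral_comp (MeasurableEquiv.measurableEmbedding _)]
  have h : ∀ y : Fin d → ℝ,
      Complex.exp (-b * (‖(MeasurableEquiv.toLp 2 (Fin d → ℝ)).symm.symm y‖ : ℂ) ^ 2
        + ∑ i, c i * (((MeasurableEquiv.toLp 2 (Fin d → ℝ)).symm.symm y) i : ℂ))
      = Complex.exp (-b * ∑ i, ((y i : ℂ)) ^ 2 + ∑ i, c i * (y i : ℂ)) := by
    intro y
    simp only [eucl_symm_apply]
    congr 2
    congr 1
    rw [← Complex.ofReal_pow, norm_sq_eucl]
    push_cast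
    exact Finset.sum_congr rfl fun i _ => by rw [eucl_symm_apply]
  simp_rw [h]
  rw [GaussianFourier.integral_cexp_neg_mul_sum_add hb c, Fintype.card_fin]

lemma step1 (z : EuclideanSpace ℝ (Fin d) × EuclideanSpace ℝ (Fin d))
    (ξ : EuclideanSpace ℝ (Fin d)) :
    fourierTf (tfShift z gaussWin) ξ =
      Complex.exp (∑ i, (2 * π * (z.1 i : ℂ) * ((z.2 i : ℂ) - (ξ i : ℂ)) * Complex.I
        - π * ((ξ i : ℂ) - (z.2 i : ℂ)) ^ 2)) := by
  have hπ : (0:ℝ) < ((π : ℂ)).re := by simp [Real.pi_pos]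
  have h : ∀ x : EuclideanSpace ℝ (Fin d),
      tfShift z gaussWin x * Complex.exp (-(2 * π * (inner ℝ x ξ : ℝ)) * Complex.I)
      = Complex.exp (∑ i, -(π:ℂ) * ((z.1 i : ℂ))^2) *
        Complex.exp (-(π:ℂ) * (‖x‖ : ℂ)^2 +
          ∑ i, (2*π*((z.1 i : ℂ)) + 2*π*((z.2 i : ℂ) - (ξ i : ℂ))*Complex.I) * (x i : ℂ)) := by
    intro x
    rw [tfShift, gaussWin, Complex.ofReal_exp, ← Complex.exp_add, ← Complex.exp_add,
      ← Complex.exp_add]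
    congr 1
    have hA : (2 * (π:ℂ) * ((inner ℝ z.2 x : ℝ) : ℂ)) * Complex.I
        = ∑ i, 2*π*((z.2 i : ℂ))*((x i : ℂ))*Complex.I := by
      rw [inner_eucl]
      push_cast [Finset.mul_sum]
      rw [Finset.sum_mul]
      exact Finset.sum_congr rfl fun i _ => by ring
    have hB : ((-π * ‖x - z.1‖^2 : ℝ) : ℂ) = ∑ i, -(π:ℂ)*((x i : ℂ) - (z.1 i : ℂ))^2 := by
      rw [norm_sq_eucl]
      push_cast [Finset.mul_sum, PiLp.sub_apply]
      exact Finset.sum_congr rfl fun i _ => by ring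
    have hC : (-(2 * (π:ℂ) * ((inner ℝ x ξ : ℝ) : ℂ))) * Complex.I
        = ∑ i, -(2*π*((x i : ℂ))*((ξ i : ℂ))*Complex.I) := by
      rw [inner_eucl]
      push_cast [Finset.mul_sum]
      rw [neg_mul, Finset.sum_mul, ← Finset.sum_neg_distrib]
      exact Finset.sum_congr rfl fun i _ => by ring
    have hN : -(π:ℂ) * (‖x‖ : ℂ)^2 = ∑ i, -(π:ℂ)*((x i : ℂ))^2 := by
      rw [← Complex.ofReal_pow, norm_sq_eucl]
      push_cast [Finset.mul_sum]
      exact Finset.sum_congr rfl fun i _ => by ring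
    rw [hA, hB, hC, hN, ← Finset.sum_add_distrib, ← Finset.sum_add_distrib,
      ← Finset.sum_add_distrib, ← Finset.sum_add_distrib]
    exact Finset.sum_congr rfl fun i _ => by ring
  rw [fourierTf]
  simp_rw [h]
  rw [MeasureTheory.integral_const_mul, gauss_int hπ, div_self (by
    simpa using Real.pi_ne_zero), one_cpow, one_mul, ← Complex.exp_add,
    Finset.sum_div, ← Finset.sum_add_distrib]
  · congr 1
    refine Finset.sum_congr rfl fun i _ => ?_
    have hπ0 : (π:ℂ) ≠ 0 := by simpa using Real.pi_ne_zero
    field_simp [hπ0]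
    ring_nf
    simp only [Complex.I_sq]
    ring
lemma cpow_mul_cpow {x y : ℂ} (hx : 0 < x.re) (hy : 0 < y.re) (a : ℂ) :
    x ^ a * y ^ a = (x * y) ^ a := by
  have hx0 : x ≠ 0 := by intro h; rw [h] at hx; simp at hx
  have hy0 : y ≠ 0 := by intro h; rw [h] at hy; simp at hy
  have hax := Complex.abs_arg_lt_pi_div_two_iff.mpr (Or.inl hx)
  have hay := Complex.abs_arg_lt_pi_div_two_iff.mpr (Or.inl hy)
  rw [Complex.cpow_def_of_ne_zero hx0, Complex.cpow_def_of_ne_zero hy0,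
    Complex.cpow_def_of_ne_zero (mul_ne_zero hx0 hy0), ← Complex.exp_add, ← add_mul,
    Complex.log_mul hx0 hy0 ?_]
  constructor
  · have := abs_lt.mp hax; have := abs_lt.mp hay; linarith [Real.pi_pos]
  · have := abs_lt.mp hax; have := abs_lt.mp hay; linarith [Real.pi_pos]

lemma const_combine {σ ρ2 : ℂ} (hσ : 0 < σ.re) (hρ2 : 0 < ρ2.re) (h : 0 < (σ / ρ2).re) (a : ℂ) :
    (1 / σ) ^ a * (σ / ρ2) ^ a = ρ2 ^ (-a) := by
  have hσ0 : σ ≠ 0 := by intro hh; rw [hh] at hσ; simp at hσ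
  have hρ0 : ρ2 ≠ 0 := by intro hh; rw [hh] at hρ2; simp at hρ2
  have h1σ : 0 < ((1:ℂ)/σ).re := by
    rw [one_div, Complex.inv_re]
    exact div_pos hσ (Complex.normSq_pos.mpr hσ0)
  rw [cpow_mul_cpow h1σ h a]
  have hmul : (1/σ) * (σ/ρ2) = ρ2⁻¹ := by field_simp
  have harg : ρ2.arg ≠ π := by
    intro hh; rw [Complex.arg_eq_pi_iff] at hh; linarith [hh.1]
  rw [hmul, Complex.inv_cpow _ _ harg, ← Complex.cpow_neg]

lemma step2 (α β t : ℝ) (hα : 0 ≤ α) (ht : 0 ≤ t)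
    (z : EuclideanSpace ℝ (Fin d) × EuclideanSpace ℝ (Fin d))
    (s : EuclideanSpace ℝ (Fin d)) :
    heatProp ((α : ℂ) + β * Complex.I) t (tfShift z gaussWin) s
      = ((1:ℂ) / (1 + 4 * π * ((α : ℂ) + β * Complex.I) * t)) ^ ((d : ℂ) / 2) *
        Complex.exp (∑ i, (-(π:ℂ) * ((z.2 i : ℂ))^2 + 2 * π * (z.1 i : ℂ) * (z.2 i : ℂ) * Complex.I
          + π / (1 + 4 * π * ((α : ℂ) + β * Complex.I) * t) *
            ((z.2 i : ℂ) + ((s i : ℂ) - (z.1 i : ℂ)) * Complex.I) ^ 2)) := by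
  set γ : ℂ := (α : ℂ) + β * Complex.I with hγ
  have hπ0 : (π:ℂ) ≠ 0 := by simpa using Real.pi_ne_zero
  have hσeq : (π:ℂ) * (1 + 4 * π * γ * t)
      = ((π * (1 + 4*π*α*t) : ℝ) : ℂ) + ((π * (4*π*β*t) : ℝ) : ℂ) * Complex.I := by
    rw [hγ]; push_cast; ring
  have hσre : 0 < ((π:ℂ) * (1 + 4 * π * γ * t)).re := by
    rw [hσeq]
    simp only [Complex.add_re, Complex.ofReal_re, Complex.mul_re, Complex.I_re, Complex.I_im,
      Complex.ofReal_im, mul_zero, zero_mul, sub_zero, mul_one, zero_sub, neg_zero, add_zero]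
    have h1 : 0 ≤ π * (α * t) := mul_nonneg Real.pi_pos.le (mul_nonneg hα ht)
    nlinarith [Real.pi_pos]
  have hσ0 : (1 + 4 * (π:ℂ) * γ * t) ≠ 0 := by
    intro hh
    rw [show (π:ℂ) * (1 + 4 * π * γ * t) = (π:ℂ) * (1 + 4 * (π:ℂ) * γ * t) by ring, hh,
      mul_zero] at hσre
    simp at hσre
  have h : ∀ ξ : EuclideanSpace ℝ (Fin d),
      Complex.exp (-4 * π ^ 2 * γ * t * (‖ξ‖:ℂ) ^ 2) * fourierTf (tfShift z gaussWin) ξ *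
        Complex.exp ((2 * (π:ℂ) * ((inner ℝ s ξ : ℝ) : ℂ)) * Complex.I)
      = Complex.exp (∑ i, (-(π:ℂ) * ((z.2 i : ℂ))^2 + 2 * π * (z.1 i : ℂ) * (z.2 i : ℂ) * Complex.I)) *
        Complex.exp (-((π:ℂ) * (1 + 4 * π * γ * t)) * (‖ξ‖:ℂ)^2 +
          ∑ i, (2*π*(z.2 i : ℂ) - 2*π*(z.1 i : ℂ)*Complex.I + 2*π*(s i : ℂ)*Complex.I) * (ξ i : ℂ)) := by
    intro ξ
    rw [step1, ← Complex.exp_add, ← Complex.exp_add, ← Complex.exp_add]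
    congr 1
    have hN : ∀ (c : ℂ), c * (‖ξ‖:ℂ)^2 = ∑ i, c * ((ξ i : ℂ))^2 := by
      intro c
      rw [← Complex.ofReal_pow, norm_sq_eucl]
      push_cast [Finset.mul_sum]
      rfl
    have hS : (2 * (π:ℂ) * ((inner ℝ s ξ : ℝ) : ℂ)) * Complex.I
        = ∑ i, 2*π*((s i : ℂ))*((ξ i : ℂ))*Complex.I := by
      rw [inner_eucl]
      push_cast [Finset.mul_sum]
      rw [Finset.sum_mul]
      exact Finset.sum_congr rfl fun i _ => by ring
    rw [show (-4 * (π:ℂ) ^ 2 * γ * ↑t * (‖ξ‖:ℂ) ^ 2) = (-4 * (π:ℂ) ^ 2 * γ * ↑t) * (‖ξ‖:ℂ)^2 by ring,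
      hN, hS, hN (-((π:ℂ) * (1 + 4 * π * γ * t))), ← Finset.sum_add_distrib,
      ← Finset.sum_add_distrib, ← Finset.sum_add_distrib, ← Finset.sum_add_distrib]
    exact Finset.sum_congr rfl fun i _ => by ring
  rw [heatProp]
  simp_rw [h]
  rw [MeasureTheory.integral_const_mul, gauss_int hσre]
  rw [show (π:ℂ) / ((π:ℂ) * (1 + 4 * π * γ * t)) = 1 / (1 + 4 * π * γ * t) by
    rw [div_mul_eq_div_div, div_self hπ0]]
  rw [mul_left_comm]
  congr 1
  rw [← Complex.exp_add, Finset.sum_div, ← Finset.sum_add_distrib]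
  congr 1
  refine Finset.sum_congr rfl fun i _ => ?_
  field_simp [hσ0]
  ring_nf
  try simp only [Complex.I_sq]
  try ring


/-- **Exact Gabor matrix of the complex heat propagator.** With `γ = α + iβ`
(`α ≥ 0`, `t ≥ 0`) and `ρ_t = 1 + 2πγt`,
`⟨Tπ(z)g, π(w)g⟩ = (2ρ_t)^{−d/2} e^{−π(|z₂|²+|w₂|²)} e^{2πi(z₂·z₁ − w₂·w₁)}
  e^{(π/(2ρ_t)) c·c}`, where `c = (z₂+w₂) + i(w₁−z₁)` and the power is principal. -/
theorem gabor_matrix_complex_heat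
    (hd : 1 ≤ d) (α β t : ℝ) (hα : 0 ≤ α) (ht : 0 ≤ t)
    (z w : EuclideanSpace ℝ (Fin d) × EuclideanSpace ℝ (Fin d)) :
    (∫ s, heatProp ((α : ℂ) + β * Complex.I) t (tfShift z gaussWin) s *
        (starRingEnd ℂ) (tfShift w gaussWin s))
      = (2 * (1 + 2 * π * ((α : ℂ) + β * Complex.I) * t)) ^ (-(d : ℂ) / 2) *
          Complex.exp (-(π : ℂ) * (‖z.2‖ ^ 2 + ‖w.2‖ ^ 2)) *
          Complex.exp (2 * π * Complex.I *
            (((inner ℝ z.2 z.1 : ℝ) : ℂ) - ((inner ℝ w.2 w.1 : ℝ) : ℂ))) *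
          Complex.exp ((π : ℂ) / (2 * (1 + 2 * π * ((α : ℂ) + β * Complex.I) * t)) *
            ∑ k, (((z.2 k + w.2 k : ℝ) : ℂ) + ((w.1 k - z.1 k : ℝ) : ℂ) * Complex.I) ^ 2) := by
  obtain ⟨γ, hγ⟩ : ∃ g : ℂ, g = (α : ℂ) + β * Complex.I := ⟨_, rfl⟩
  rw [← hγ]
  have hπ0 : (π:ℂ) ≠ 0 := by simpa using Real.pi_ne_zero
  have hstep2 : ∀ s : EuclideanSpace ℝ (Fin d),
      heatProp γ t (tfShift z gaussWin) s
        = ((1:ℂ) / (1 + 4 * π * γ * t)) ^ ((d : ℂ) / 2) *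
          Complex.exp (∑ i, (-(π:ℂ) * ((z.2 i : ℂ))^2 + 2 * π * (z.1 i : ℂ) * (z.2 i : ℂ) * Complex.I
            + π / (1 + 4 * π * γ * t) *
              ((z.2 i : ℂ) + ((s i : ℂ) - (z.1 i : ℂ)) * Complex.I) ^ 2)) := by
    subst hγ; exact step2 α β t hα ht z
  -- real-decomposition of the relevant constants
  have hσc : (1 + 4*(π:ℂ)*γ*t) = ((1+4*π*(α*t) : ℝ) : ℂ) + ((4*π*(β*t) : ℝ) : ℂ) * Complex.I := by
    rw [hγ]; push_cast; ring
  have hρ2c : (2 * (1 + 2*(π:ℂ)*γ*t)) = ((2+4*π*(α*t) : ℝ) : ℂ) + ((4*π*(β*t) : ℝ) : ℂ) * Complex.I := by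
    rw [hγ]; push_cast; ring
  have hA : (0:ℝ) < 1+4*π*(α*t) := by nlinarith [Real.pi_pos, mul_nonneg hα ht]
  have hA2 : (0:ℝ) < 2+4*π*(α*t) := by nlinarith [Real.pi_pos, mul_nonneg hα ht]
  have hre1 : ((1 + 4*(π:ℂ)*γ*t)).re = 1+4*π*(α*t) := by
    rw [hσc]; simp
  have him1 : ((1 + 4*(π:ℂ)*γ*t)).im = 4*π*(β*t) := by
    rw [hσc]; simp
  have hre2 : ((2 * (1 + 2*(π:ℂ)*γ*t))).re = 2+4*π*(α*t) := by
    rw [hρ2c]; simp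
  have him2 : ((2 * (1 + 2*(π:ℂ)*γ*t))).im = 4*π*(β*t) := by
    rw [hρ2c]; simp
  have hσ0 : (1 + 4*(π:ℂ)*γ*t) ≠ 0 := by
    intro hh; rw [hh] at hre1; simp at hre1; nlinarith
  have hρ20 : (2 * (1 + 2*(π:ℂ)*γ*t)) ≠ 0 := by
    intro hh; rw [hh] at hre2; simp at hre2; nlinarith
  have hρ0 : (1 + 2*(π:ℂ)*γ*t) ≠ 0 := by
    intro hh; rw [hh, mul_zero] at hρ20; exact hρ20 rfl
  have hσre : 0 < ((1 + 4*(π:ℂ)*γ*t)).re := by rw [hre1]; exact hA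
  have hρ2re : 0 < ((2 * (1 + 2*(π:ℂ)*γ*t))).re := by rw [hre2]; exact hA2
  have hdivre : 0 < ((1 + 4*(π:ℂ)*γ*t) / (2 * (1 + 2*(π:ℂ)*γ*t))).re := by
    rw [Complex.div_re, hre1, him1, hre2, him2]
    have hN : 0 < Complex.normSq (2 * (1 + 2*(π:ℂ)*γ*t)) := Complex.normSq_pos.mpr hρ20
    have h1 : 0 < (1+4*π*(α*t)) * (2+4*π*(α*t)) := mul_pos hA hA2
    have h2 : (0:ℝ) ≤ 4*π*(β*t) * (4*π*(β*t)) := mul_self_nonneg _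
    positivity
  have hbre : 0 < ((2*(π:ℂ)*(1 + 2*π*γ*t)) / (1 + 4*π*γ*t)).re := by
    have hρc : (2*(π:ℂ)*(1 + 2*π*γ*t)) = ((2*π*(1+2*π*(α*t)) : ℝ) : ℂ) + ((4*π^2*(β*t) : ℝ) : ℂ) * Complex.I := by
      rw [hγ]; push_cast; ring
    rw [Complex.div_re, hρc, hre1, him1]
    simp only [Complex.add_re, Complex.ofReal_re, Complex.mul_re, Complex.I_re, Complex.I_im,
      Complex.ofReal_im, mul_zero, zero_mul, sub_zero, mul_one, zero_sub, neg_zero, add_zero,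
      Complex.add_im, Complex.mul_im, zero_add]
    have hN : 0 < Complex.normSq (1 + 4*(π:ℂ)*γ*t) := Complex.normSq_pos.mpr hσ0
    have h1 : 0 < (2*π*(1+2*π*(α*t))) * (1+4*π*(α*t)) := by
      have h3 : (0:ℝ) < 1+2*π*(α*t) := by nlinarith [Real.pi_pos, mul_nonneg hα ht]
      exact mul_pos (mul_pos (by positivity) h3) hA
    have h2 : (0:ℝ) ≤ 4*π^2*(β*t) * (4*π*(β*t)) := by
      nlinarith [mul_nonneg (pow_pos Real.pi_pos 3).le (sq_nonneg (β*t))]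
    exact add_pos_of_pos_of_nonneg (div_pos h1 hN) (div_nonneg h2 hN.le)
  -- pointwise rewriting of the integrand
  have h : ∀ s : EuclideanSpace ℝ (Fin d),
      ((1:ℂ) / (1 + 4 * π * γ * t)) ^ ((d : ℂ) / 2) *
        Complex.exp (∑ i, (-(π:ℂ) * ((z.2 i : ℂ))^2 + 2 * π * (z.1 i : ℂ) * (z.2 i : ℂ) * Complex.I
          + π / (1 + 4 * π * γ * t) *
            ((z.2 i : ℂ) + ((s i : ℂ) - (z.1 i : ℂ)) * Complex.I) ^ 2)) *
        (starRingEnd ℂ) (tfShift w gaussWin s)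
      = ((1:ℂ) / (1 + 4 * π * γ * t)) ^ ((d : ℂ) / 2) *
        (Complex.exp (∑ i, (-(π:ℂ) * ((z.2 i : ℂ))^2 + 2 * π * (z.1 i : ℂ) * (z.2 i : ℂ) * Complex.I
            + π / (1 + 4 * π * γ * t) * ((z.2 i : ℂ) - (z.1 i : ℂ) * Complex.I) ^ 2
            - π * ((w.1 i : ℂ))^2)) *
        Complex.exp (-((2*(π:ℂ)*(1 + 2*π*γ*t)) / (1 + 4*π*γ*t)) * (‖s‖:ℂ)^2 +
          ∑ i, (2*π/(1 + 4*π*γ*t)*((z.1 i : ℂ) + (z.2 i : ℂ)*Complex.I)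
            - 2*π*(w.2 i : ℂ)*Complex.I + 2*π*(w.1 i : ℂ)) * (s i : ℂ))) := by
    intro s
    rw [mul_assoc]
    congr 1
    have hconj : (starRingEnd ℂ) (tfShift w gaussWin s)
        = Complex.exp (-(2 * (π:ℂ) * ((inner ℝ w.2 s : ℝ) : ℂ)) * Complex.I) *
          Complex.exp (((-π * ‖s - w.1‖^2 : ℝ) : ℂ)) := by
      rw [tfShift, gaussWin, Complex.ofReal_exp, map_mul, ← Complex.exp_conj, ← Complex.exp_conj]
      congr 1
      · congr 1
        simp only [map_mul, Complex.conj_I, Complex.conj_ofReal, map_ofNat]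
        ring
      · rw [Complex.conj_ofReal]
    rw [hconj, ← mul_assoc, ← Complex.exp_add, ← Complex.exp_add, ← Complex.exp_add]
    congr 1
    have hW : ((-π * ‖s - w.1‖^2 : ℝ) : ℂ) = ∑ i, -(π:ℂ)*((s i : ℂ) - (w.1 i : ℂ))^2 := by
      rw [norm_sq_eucl]
      push_cast [Finset.mul_sum, PiLp.sub_apply]
      exact Finset.sum_congr rfl fun i _ => by ring
    have hS : (-(2 * (π:ℂ) * ((inner ℝ w.2 s : ℝ) : ℂ))) * Complex.I
        = ∑ i, -(2*π*((w.2 i : ℂ))*((s i : ℂ))*Complex.I) := by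
      rw [inner_eucl]
      push_cast [Finset.mul_sum]
      rw [neg_mul, Finset.sum_mul, ← Finset.sum_neg_distrib]
      exact Finset.sum_congr rfl fun i _ => by ring
    have hN : ∀ (c : ℂ), c * (‖s‖:ℂ)^2 = ∑ i, c * ((s i : ℂ))^2 := by
      intro c
      rw [← Complex.ofReal_pow, norm_sq_eucl]
      push_cast [Finset.mul_sum]
      rfl
    rw [hW, hS, hN (-((2*(π:ℂ)*(1 + 2*π*γ*t)) / (1 + 4*π*γ*t))), ← Finset.sum_add_distrib,
      ← Finset.sum_add_distrib, ← Finset.sum_add_distrib, ← Finset.sum_add_distrib]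
    refine Finset.sum_congr rfl fun i _ => ?_
    field_simp [hσ0, show (1 + (π:ℂ)*4*γ*t) ≠ 0 by rw [show (1 + (π:ℂ)*4*γ*t) = 1 + 4*π*γ*t by ring]; exact hσ0]
    ring_nf
    try simp only [Complex.I_sq]
    try ring
  simp_rw [hstep2, h]
  rw [MeasureTheory.integral_const_mul, MeasureTheory.integral_const_mul, gauss_int hbre]
  rw [show (π:ℂ) / ((2*(π:ℂ)*(1 + 2*π*γ*t)) / (1 + 4*π*γ*t)) = (1 + 4*π*γ*t) / (2 * (1 + 2*π*γ*t)) by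
    field_simp]
  conv_lhs => enter [2]; rw [mul_left_comm]
  conv_lhs => rw [← mul_assoc]
  rw [const_combine hσre hρ2re hdivre]
  conv_lhs => enter [2]; rw [← Complex.exp_add]
  conv_rhs => rw [mul_assoc, mul_assoc]
  conv_rhs => enter [2]; rw [← Complex.exp_add, ← Complex.exp_add]
  congr 1
  · rw [neg_div]
  congr 1
  have hz2 : -(π:ℂ) * ((‖z.2‖:ℂ)^2 + (‖w.2‖:ℂ)^2) = ∑ i, (-(π:ℂ)*((z.2 i : ℂ))^2 - π*((w.2 i : ℂ))^2) := by
    rw [← Complex.ofReal_pow, ← Complex.ofReal_pow, norm_sq_eucl, norm_sq_eucl]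
    push_cast [Finset.mul_sum]
    rw [mul_add, Finset.mul_sum, Finset.mul_sum, ← Finset.sum_add_distrib]
    exact Finset.sum_congr rfl fun i _ => by ring
  have hzin : 2*(π:ℂ)*Complex.I*(((inner ℝ z.2 z.1 : ℝ) : ℂ) - ((inner ℝ w.2 w.1 : ℝ) : ℂ))
      = ∑ i, (2*π*((z.2 i : ℂ))*((z.1 i : ℂ))*Complex.I - 2*π*((w.2 i : ℂ))*((w.1 i : ℂ))*Complex.I) := by
    rw [inner_eucl, inner_eucl]
    push_cast [Finset.mul_sum]
    rw [mul_sub, Finset.mul_sum, Finset.mul_sum, ← Finset.sum_sub_distrib]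
    exact Finset.sum_congr rfl fun i _ => by ring
  have hlast : (π:ℂ) / (2 * (1 + 2*π*γ*t)) *
      ∑ k, (((z.2 k + w.2 k : ℝ) : ℂ) + ((w.1 k - z.1 k : ℝ) : ℂ) * Complex.I) ^ 2
      = ∑ i, (π:ℂ) / (2 * (1 + 2*π*γ*t)) *
          (((z.2 i : ℂ) + (w.2 i : ℂ)) + ((w.1 i : ℂ) - (z.1 i : ℂ)) * Complex.I) ^ 2 := by
    rw [Finset.mul_sum]
    push_cast
    rfl
  rw [hz2, hzin, hlast]
  rw [show ((4:ℂ) * (2*(π:ℂ)*(1 + 2*π*γ*t) / (1 + 4*π*γ*t)))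
      = (8*(π:ℂ)*(1 + 2*π*γ*t)) / (1 + 4*π*γ*t) by ring]
  rw [div_div_eq_mul_div, Finset.sum_mul, Finset.sum_div, ← Finset.sum_add_distrib,
    ← Finset.sum_add_distrib, ← Finset.sum_add_distrib]
  have h8 : (8:ℂ)*π*(1 + 2*π*γ*t) ≠ 0 := by
    exact mul_ne_zero (mul_ne_zero (by norm_num) hπ0) hρ0
  refine Finset.sum_congr rfl fun i _ => ?_
  field_simp [hσ0, hρ0, hπ0, hρ20, h8, show (1 + (π:ℂ)*4*γ*t) ≠ 0 by rw [show (1 + (π:ℂ)*4*γ*t) = 1 + 4*π*γ*t by ring]; exact hσ0, show (1 + (π:ℂ)*2*γ*t) ≠ 0 by rw [show (1 + (π:ℂ)*2*γ*t) = 1 + 2*π*γ*t by ring]; exact hρ0]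
  ring_nf
  try simp only [Complex.I_sq]
  try ring
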